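/- Let X ⊆ D with M|_{X×X} symmetric, not pure, no row containing both 0 and 1, and no length-2 derectangularising sequence among subsets of X. Let X_0 be the set of rows of M|_{X×X} containing a 0. Then there is no odd-length sequence d_1, …, d_ℓ ∈ X_0 with M_{d_1,d_2} = M_{d_2,d_3} = ⋯ = M_{d_{ℓ-1},d_ℓ} = M_{d_ℓ,d_1} = *. Consequently, in any M-partition of a graph restricted to parts in X, the vertices assigned to parts in X_0 induce a bipartite graph. -/
import Mathlib


inductive Entry | zero | one | star
deriving DecidableEq

def Rectangular {α β : Type*} (R : Set (α × β)) : Prop :=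
  ∀ i j i' j', (i, i') ∈ R → (i, j') ∈ R → (j, i') ∈ R → (j, j') ∈ R

def H {D : Type*} (M : D → D → Entry) (X Y : Set D) : Set (D × D) :=
  {p | p.1 ∈ X ∧ p.2 ∈ Y ∧ M p.1 p.2 = Entry.star}

def MatPure {D : Type*} (M : D → D → Entry) (X Y : Set D) : Prop :=
  (∀ i ∈ X, ∀ j ∈ Y, M i j ≠ Entry.zero) ∨ (∀ i ∈ X, ∀ j ∈ Y, M i j ≠ Entry.one)

/-- The minimum (in `WithTop ℕ`) of the indices of the `R`-neighbours of `x`. -/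
noncomputable def nbhdMin {D : Type} [Fintype D] (R : D → D → Prop) (x : D) : WithTop ℕ :=
  ((@Finset.filter D (fun z => R x z) (Classical.decPred _) Finset.univ).image
    (fun a => ((Fintype.equivFin D) a : ℕ))).min

theorem exists_two_coloring {D : Type} [Fintype D] (R : D → D → Prop)
    (hsymm : ∀ x y, R x y → R y x)
    (hrect : ∀ x y z w, R x z → R x w → R y z → R y w)
    (hnoloop : ∀ x, ¬ R x x) :
    ∃ c : D → Fin 2, ∀ x y, R x y → c x ≠ c y := by
  classical
  set g : D → ℕ := fun a => ((Fintype.equivFin D) a : ℕ) with hg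
  have hginj : Function.Injective g := fun a b h =>
    (Fintype.equivFin D).injective (Fin.val_injective h)
  set R2 : D → D → Prop := fun x z => ∃ u, R x u ∧ R u z with hR2
  -- if `R x y` then the 2-step neighbourhood of `x` equals the neighbourhood of `y`
  have hkey : ∀ x y, R x y → nbhdMin R2 x = nbhdMin R y := by
    intro x y hxy
    unfold nbhdMin
    congr 1
    congr 1
    ext z
    simp only [Finset.mem_filter, Finset.mem_univ, true_and]
    constructor
    · rintro ⟨u, hxu, huz⟩
      exact hrect u y x z (hsymm x u hxu) huz (hsymm x y hxy)
    · intro h; exact ⟨y, hxy, h⟩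
  -- neighbours witness membership
  have hmemmin : ∀ x, (∃ y, R x y) →
      ∃ u, R x u ∧ nbhdMin R x = (g u : WithTop ℕ) := by
    intro x ⟨y, hy⟩
    have hne : ((@Finset.filter D (fun z => R x z) (Classical.decPred _) Finset.univ).image g).Nonempty :=
      ⟨g y, Finset.mem_image_of_mem _ (by simp [hy])⟩
    obtain ⟨u, hu, hgu⟩ := Finset.mem_image.1 (Finset.min'_mem _ hne)
    refine ⟨u, (Finset.mem_filter.1 hu).2, ?_⟩
    rw [nbhdMin, ← Finset.coe_min' hne, hgu]
    rfl
  -- adjacent vertices have distinct neighbourhood minima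
  have hneq : ∀ x y, R x y → nbhdMin R x ≠ nbhdMin R y := by
    intro x y hxy hEq
    obtain ⟨u, hxu, hu⟩ := hmemmin x ⟨y, hxy⟩
    obtain ⟨v, hyv, hv⟩ := hmemmin y ⟨x, hsymm x y hxy⟩
    have huv : u = v := by
      apply hginj
      have : (g u : WithTop ℕ) = (g v : WithTop ℕ) := by rw [← hu, ← hv, hEq]
      exact_mod_cast this
    subst huv
    -- u is a common neighbour of x and y, and R x y, so R x x: contradiction
    exact hnoloop x (hrect y x u x hyv (hsymm x y hxy) hxu)
  refine ⟨fun x => if nbhdMin R2 x < nbhdMin R x then 0 else 1, ?_⟩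
  intro x y hxy
  have h1 : nbhdMin R2 x = nbhdMin R y := hkey x y hxy
  have h2 : nbhdMin R2 y = nbhdMin R x := hkey y x (hsymm x y hxy)
  have h3 : nbhdMin R x ≠ nbhdMin R y := hneq x y hxy
  rcases h3.lt_or_gt with h | h <;>
    simp [h1, h2, h, not_lt.2 h.le, lt_asymm h]

theorem no_odd_star_cycle_in_X0 {D : Type} [Fintype D] (M : D → D → Entry) (X : Set D)
    (hsym : ∀ i ∈ X, ∀ j ∈ X, M i j = M j i)
    (hnp : ¬ MatPure M X X)
    (hrow : ∀ i ∈ X, ¬ ((∃ j ∈ X, M i j = Entry.zero) ∧ (∃ j ∈ X, M i j = Entry.one)))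
    (hrect : ∀ A B : Set D, A ⊆ X → B ⊆ X → MatPure M A B → MatPure M A A →
      MatPure M B B → Rectangular (H M A B)) :
    (¬ ∃ ℓ : ℕ, Odd ℓ ∧ ∃ d : ZMod ℓ → D,
        (∀ i, d i ∈ {x ∈ X | ∃ y ∈ X, M x y = Entry.zero}) ∧
        (∀ i, M (d i) (d (i + 1)) = Entry.star)) ∧
    (∀ (V : Type) (G : SimpleGraph V) (σ : V → D),
      (∀ u, σ u ∈ X) →
      (∀ u w : V, u ≠ w →
        (G.Adj u w → M (σ u) (σ w) ≠ Entry.zero) ∧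
        (¬ G.Adj u w → M (σ u) (σ w) ≠ Entry.one)) →
      (SimpleGraph.induce {u : V | σ u ∈ {x ∈ X | ∃ y ∈ X, M x y = Entry.zero}} G).Colorable 2) := by
  classical
  set X0 : Set D := {x ∈ X | ∃ y ∈ X, M x y = Entry.zero} with hX0def
  have hX0sub : X0 ⊆ X := fun x hx => hx.1
  have hX0no1 : ∀ i ∈ X0, ∀ j ∈ X, M i j ≠ Entry.one := by
    rintro i ⟨hiX, hi0⟩ j hj h1
    exact hrow i hiX ⟨hi0, ⟨j, hj, h1⟩⟩
  have hpure0 : MatPure M X0 X0 :=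
    Or.inr (fun i hi j hj => hX0no1 i hi j (hX0sub hj))
  have hR : Rectangular (H M X0 X0) := hrect X0 X0 hX0sub hX0sub hpure0 hpure0 hpure0
  have hRsymm : ∀ {x y : D}, (x, y) ∈ H M X0 X0 → (y, x) ∈ H M X0 X0 := by
    rintro x y ⟨hx, hy, hs⟩
    exact ⟨hy, hx, by rw [← hsym x (hX0sub hx) y (hX0sub hy)]; exact hs⟩
  -- the one-entry from impurity
  have hone : ∃ p ∈ X, ∃ q ∈ X, M p q = Entry.one := by
    by_contra hc
    push_neg at hc
    exact hnp (Or.inr hc)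
  obtain ⟨p, hp, q, hq, hpq⟩ := hone
  have hpno0 : ∀ z ∈ X, M p z ≠ Entry.zero := fun z hz h0 =>
    hrow p hp ⟨⟨z, hz, h0⟩, ⟨q, hq, hpq⟩⟩
  have hqp1 : M q p = Entry.one := by rw [← hsym p hp q hq]; exact hpq
  have hqno0 : ∀ z ∈ X, M q z ≠ Entry.zero := fun z hz h0 =>
    hrow q hq ⟨⟨z, hz, h0⟩, ⟨p, hp, hqp1⟩⟩
  -- Part 1: no odd star cycle
  have hnc : ¬ ∃ ℓ : ℕ, Odd ℓ ∧ ∃ d : ZMod ℓ → D,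
      (∀ i, d i ∈ X0) ∧ (∀ i, M (d i) (d (i + 1)) = Entry.star) := by
    rintro ⟨ℓ, ⟨k, hk⟩, d, hd0, hds⟩
    have hℓpos : ℓ ≠ 0 := by omega
    set e : ℕ → D := fun i => d ((i : ℕ) : ZMod ℓ) with he
    have hestep : ∀ i : ℕ, (e i, e (i + 1)) ∈ H M X0 X0 := by
      intro i
      refine ⟨hd0 _, hd0 _, ?_⟩
      have hcast : (((i + 1 : ℕ)) : ZMod ℓ) = ((i : ℕ) : ZMod ℓ) + 1 := by push_cast; ring
      show M (d ((i : ℕ) : ZMod ℓ)) (d (((i + 1 : ℕ)) : ZMod ℓ)) = Entry.star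
      rw [hcast]
      exact hds _
    have hpath : ∀ m : ℕ, (e 0, e (2 * m + 1)) ∈ H M X0 X0 := by
      intro m
      induction m with
      | zero => simpa using hestep 0
      | succ n ih =>
        have h1 := hestep (2 * n + 1)
        have h2 := hestep (2 * n + 1 + 1)
        have hconc := hR (e (2 * n + 1 + 1)) (e 0) (e (2 * n + 1)) (e (2 * n + 1 + 1 + 1))
          (hRsymm h1) h2 ih
        have hnum : 2 * (n + 1) + 1 = 2 * n + 1 + 1 + 1 := by ring
        rw [hnum]
        exact hconc
    have hEe : e (2 * k + 1) = e 0 := by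
      show d _ = d _
      congr 1
      rw [← hk]
      simp
    have hloop : (e 0, e 0) ∈ H M X0 X0 := hEe ▸ hpath k
    obtain ⟨haX0, -, haa⟩ := hloop
    set a : D := e 0
    have haX : a ∈ X := hX0sub haX0
    have hano1 : ∀ z ∈ X, M a z ≠ Entry.one := hX0no1 a haX0
    have hstar_of : ∀ z, z ∈ X → (∀ w ∈ X, M z w ≠ Entry.zero) → M a z = Entry.star := by
      intro z hz hzno0
      have h1 : M a z ≠ Entry.one := hano1 z hz
      have h0 : M a z ≠ Entry.zero := by
        rw [hsym a haX z hz]; exact hzno0 a haX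
      cases hmz : M a z
      · exact absurd hmz h0
      · exact absurd hmz h1
      · rfl
    have hap : M a p = Entry.star := hstar_of p hp hpno0
    have haq : M a q = Entry.star := hstar_of q hq hqno0
    have hpa : M p a = Entry.star := by rw [hsym p hp a haX]; exact hap
    have hAX : ({a, p} : Set D) ⊆ X := by
      rintro z hz
      rcases hz with rfl | hz
      · exact haX
      · rw [Set.mem_singleton_iff] at hz; subst hz; exact hp
    have hBX : ({a, q} : Set D) ⊆ X := by
      rintro z hz
      rcases hz with rfl | hz
      · exact haX
      · rw [Set.mem_singleton_iff] at hz; subst hz; exact hq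
    have hpureAB : MatPure M ({a, p} : Set D) ({a, q} : Set D) := by
      left
      intro i hi j hj
      simp only [Set.mem_insert_iff, Set.mem_singleton_iff] at hi hj
      rcases hi with hi | hi <;> rcases hj with hj | hj <;> rw [hi, hj]
      · simp [haa]
      · simp [haq]
      · simp [hpa]
      · simp [hpq]
    have hpureAA : MatPure M ({a, p} : Set D) ({a, p} : Set D) := by
      left
      intro i hi j hj
      simp only [Set.mem_insert_iff, Set.mem_singleton_iff] at hi hj
      rcases hi with hi | hi <;> rcases hj with hj | hj <;> rw [hi, hj]
      · simp [haa]
      · simp [hap]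
      · simp [hpa]
      · exact hpno0 p hp
    have hpureBB : MatPure M ({a, q} : Set D) ({a, q} : Set D) := by
      left
      intro i hi j hj
      simp only [Set.mem_insert_iff, Set.mem_singleton_iff] at hi hj
      have hqa : M q a = Entry.star := by rw [hsym q hq a haX]; exact haq
      rcases hi with hi | hi <;> rcases hj with hj | hj <;> rw [hi, hj]
      · simp [haa]
      · simp [haq]
      · simp [hqa]
      · exact hqno0 q hq
    have hrectAB := hrect {a, p} {a, q} hAX hBX hpureAB hpureAA hpureBB
    have hmemA : a ∈ ({a, p} : Set D) := Set.mem_insert _ _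
    have hmemB : a ∈ ({a, q} : Set D) := Set.mem_insert _ _
    have hmemP : p ∈ ({a, p} : Set D) := by simp
    have hmemQ : q ∈ ({a, q} : Set D) := by simp
    have hfinal := hrectAB a p a q ⟨hmemA, hmemB, haa⟩ ⟨hmemA, hmemQ, haq⟩
      ⟨hmemP, hmemB, hpa⟩
    have : M p q = Entry.star := hfinal.2.2
    rw [hpq] at this
    exact Entry.noConfusion this
  refine ⟨hnc, ?_⟩
  -- Part 2: the induced graph on X0-vertices is 2-colorable
  have hnoloop : ∀ x : D, ¬ (x, x) ∈ H M X0 X0 := by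
    rintro x ⟨hx, -, hs⟩
    exact hnc ⟨1, odd_one, fun _ => x, fun _ => hx, fun _ => hs⟩
  obtain ⟨c, hc⟩ := exists_two_coloring (fun x y => (x, y) ∈ H M X0 X0)
    (fun x y h => hRsymm h)
    (fun x y z w h1 h2 h3 => hR x y z w h1 h2 h3)
    hnoloop
  intro V G σ hσX hσcond
  refine ⟨SimpleGraph.Coloring.mk (fun u => c (σ u.val)) ?_⟩
  rintro ⟨u, hu⟩ ⟨w, hw⟩ hadj
  have hadj' : G.Adj u w := hadj
  have huw : u ≠ w := fun h => G.ne_of_adj hadj' (by rw [h])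
  have hcond := hσcond u w huw
  have h0 : M (σ u) (σ w) ≠ Entry.zero := hcond.1 hadj'
  have h1 : M (σ u) (σ w) ≠ Entry.one := by
    intro hone
    exact hrow (σ u) (hσX u) ⟨hu.2, ⟨σ w, hσX w, hone⟩⟩
  have hstar : M (σ u) (σ w) = Entry.star := by
    cases hmz : M (σ u) (σ w)
    · exact absurd hmz h0
    · exact absurd hmz h1
    · rfl
  exact hc (σ u) (σ w) ⟨hu, hw, hstar⟩
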